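/- Let F be a field and U_1,...,U_m, V_1,...,V_m subspaces of an n-dimensional vector space W over F such that U_i ∩ V_i = {0} for all 1 ≤ i ≤ m and U_i ∩ V_j ≠ {0} for all 1 ≤ i < j ≤ m. Then m ≤ 2^n. -/

import Mathlib

open Module

/-- The family of `n` vectors obtained by concatenating `x : Fin da → W` and `y : Fin db → W`,
reindexed along `Fin da ⊕ Fin db ≃ Fin n`. -/
noncomputable def mixFam {W : Type*} (n : ℕ) {da db : ℕ} (hab : da + db = n)
    (x : Fin da → W) (y : Fin db → W) : Fin n → W :=
  Sum.elim x y ∘ (finSumFinEquiv.trans (finCongr hab)).symm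

section Aux
variable {F : Type*} [Field F] {W : Type*} [AddCommGroup W] [Module F W] {n m : ℕ}


theorem exists_compl_ge (U V : Submodule F W) (h : U ⊓ V = ⊥) :
    ∃ V', V ≤ V' ∧ IsCompl U V' := by
  obtain ⟨C, hC⟩ := Submodule.exists_isCompl (U ⊔ V)
  refine ⟨V ⊔ C, le_sup_left, ⟨?_, ?_⟩⟩
  · rw [Submodule.disjoint_def]
    intro x hxU hxVC
    rw [Submodule.mem_sup] at hxVC
    obtain ⟨v, hv, c, hc, rfl⟩ := hxVC
    have hcmem : c ∈ (U ⊔ V) ⊓ C := by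
      refine Submodule.mem_inf.mpr ⟨?_, hc⟩
      have hcv : c = (v + c) - v := by abel
      rw [hcv]
      exact Submodule.sub_mem _ (Submodule.mem_sup_left hxU) (Submodule.mem_sup_right hv)
    rw [hC.inf_eq_bot, Submodule.mem_bot] at hcmem
    subst hcmem
    have : v ∈ U ⊓ V := Submodule.mem_inf.mpr ⟨by simpa using hxU, hv⟩
    rw [h, Submodule.mem_bot] at this
    simp [this]
  · rw [codisjoint_iff, ← sup_assoc]
    exact codisjoint_iff.mp hC.codisjoint

/-- Rows of a "triangular" array are linearly independent. -/
theorem triangular_li {m : ℕ} (v : Fin m → Fin m → F)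
    (hdiag : ∀ i, v i i ≠ 0) (htri : ∀ i j, i < j → v i j = 0) :
    LinearIndependent F v := by
  classical
  rw [Fintype.linearIndependent_iff]
  intro g hg
  by_contra hne
  push_neg at hne
  obtain ⟨i₁, hi₁⟩ := hne
  set s : Finset (Fin m) := Finset.univ.filter (fun i => g i ≠ 0) with hs_def
  have hs : s.Nonempty := ⟨i₁, by simp [hs_def, hi₁]⟩
  set i₀ := s.max' hs with hi₀def
  have hgi₀ : g i₀ ≠ 0 := (Finset.mem_filter.mp (s.max'_mem hs)).2
  have h0 : (∑ i, g i • v i) i₀ = 0 := by rw [hg]; rfl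
  rw [Finset.sum_apply] at h0
  have hsingle : ∑ i, (g i • v i) i₀ = g i₀ * v i₀ i₀ := by
    rw [Finset.sum_eq_single i₀]
    · simp
    · intro b _ hb
      rcases lt_or_gt_of_ne hb with hlt | hgt
      · simp [htri b i₀ hlt]
      · have hb' : b ∉ s := fun hmem => absurd (s.le_max' b hmem) (not_le.mpr hgt)
        have : g b = 0 := by
          by_contra hgb
          exact hb' (by simp [hs_def, hgb])
        simp [this]
    · intro hmem
      simp at hmem
  rw [hsingle] at h0
  rcases mul_eq_zero.mp h0 with h | h
  · exact hgi₀ h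
  · exact hdiag i₀ h

/-- Count: independent rows in a span of `2^n` vectors. -/
theorem card_le_of_span {n m : ℕ} {v : Fin m → Fin m → F}
    (hli : LinearIndependent F v) (r : Finset (Fin n) → Fin m → F)
    (hmem : ∀ i, v i ∈ Submodule.span F (Set.range r)) : m ≤ 2 ^ n := by
  classical
  set P := Submodule.span F (Set.range r) with hP
  let v' : Fin m → P := fun i => ⟨v i, hmem i⟩
  have hli' : LinearIndependent F v' := by
    apply LinearIndependent.of_comp P.subtype
    exact hli
  have h1 : Fintype.card (Fin m) ≤ finrank F P := hli'.fintype_card_le_finrank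
  have h2 : finrank F P ≤ (Set.range r).toFinset.card := finrank_span_le_card _
  have h3 : (Set.range r).toFinset.card ≤ Fintype.card (Finset (Fin n)) := by
    rw [Set.toFinset_card]
    exact Fintype.card_range_le r
  have h4 : Fintype.card (Finset (Fin n)) = 2 ^ n := by simp [Fintype.card_finset]
  have := (h1.trans (h2.trans h3))
  rw [h4, Fintype.card_fin] at this
  exact this

variable {F : Type*} [Field F] {W : Type*} [AddCommGroup W] [Module F W] {n m : ℕ}

theorem det_mix_dup (e : Basis (Fin n) F W) {da db : ℕ} (hab : da + db = n)
    (x : Fin da → W) (y : Fin db → W) {k₁ k₂ : Fin da} (hk : k₁ ≠ k₂) (hx : x k₁ = x k₂) :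
    e.det (mixFam n hab x y) = 0 := by
  classical
  set E := finSumFinEquiv.trans (finCongr hab) with hEdef
  refine AlternatingMap.map_eq_zero_of_eq _ _
    (?_ : mixFam n hab x y (E (Sum.inl k₁)) = mixFam n hab x y (E (Sum.inl k₂))) ?_
  · simp only [mixFam, Function.comp_apply, Equiv.symm_apply_apply, Sum.elim_inl]
    simpa [hEdef] using hx
  · intro hEE
    exact hk (Sum.inl_injective (E.injective hEE))

theorem det_mix_perm (e : Basis (Fin n) F W) {da db : ℕ} (hab : da + db = n)
    (x : Fin da → W) (y : Fin db → W) (π : Equiv.Perm (Fin da)) :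
    e.det (mixFam n hab (x ∘ π) y) =
      (((Equiv.Perm.sign π : ℤ) : F)) • e.det (mixFam n hab x y) := by
  classical
  set E := finSumFinEquiv.trans (finCongr hab) with hEdef
  set σ : Equiv.Perm (Fin n) := E.permCongr (Equiv.sumCongr π (Equiv.refl (Fin db))) with hσdef
  have hfam : mixFam n hab (x ∘ π) y = (mixFam n hab x y) ∘ σ := by
    funext t
    have h1 : E.symm (σ t) = Equiv.sumCongr π (Equiv.refl (Fin db)) (E.symm t) := by
      simp [hσdef, Equiv.permCongr_apply]
    simp only [mixFam, Function.comp_apply, ← hEdef, h1]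
    rcases hs : E.symm t with k | l <;> simp
  rw [hfam, AlternatingMap.map_perm]
  have hsign : Equiv.Perm.sign σ = Equiv.Perm.sign π := by
    simp [hσdef, Equiv.Perm.sign_permCongr, Equiv.Perm.sign_sumCongr]
  rw [hsign, Units.smul_def, ← Int.cast_smul_eq_zsmul F]

noncomputable def rowF (e : Basis (Fin n) F W) (d : Fin m → ℕ) (hd : ∀ j, d j ≤ n)
    (famV : ∀ j, Fin (n - d j) → W) (da : ℕ) (f : Fin da → Fin n) : Fin m → F :=
  fun j => if h : da = d j then
    e.det (mixFam n (show da + (n - d j) = n by have := hd j; omega) (⇑e ∘ f) (famV j))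
  else 0

noncomputable def rowS (e : Basis (Fin n) F W) (d : Fin m → ℕ) (hd : ∀ j, d j ≤ n)
    (famV : ∀ j, Fin (n - d j) → W) (S : Finset (Fin n)) : Fin m → F :=
  rowF e d hd famV S.card (fun k => (S.orderIsoOfFin rfl k : Fin n))

theorem rowF_cast (e : Basis (Fin n) F W) (d : Fin m → ℕ) (hd : ∀ j, d j ≤ n)
    (famV : ∀ j, Fin (n - d j) → W) {da da' : ℕ} (hda : da = da') (f : Fin da' → Fin n) :
    rowF e d hd famV da (f ∘ Fin.cast hda) = rowF e d hd famV da' f := by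
  subst hda; rfl

theorem orderIso_cast {α : Type*} [LinearOrder α] (S : Finset α) {a : ℕ} (h : S.card = a)
    (k : Fin a) :
    (S.orderIsoOfFin h k : α) = S.orderIsoOfFin rfl (Fin.cast h.symm k) := by
  subst h; rfl

theorem rowF_perm (e : Basis (Fin n) F W) (d : Fin m → ℕ) (hd : ∀ j, d j ≤ n)
    (famV : ∀ j, Fin (n - d j) → W) (da : ℕ) (f : Fin da → Fin n) (π : Equiv.Perm (Fin da)) :
    rowF e d hd famV da (f ∘ π) =
      (((Equiv.Perm.sign π : ℤ) : F)) • rowF e d hd famV da f := by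
  funext j
  simp only [rowF, Pi.smul_apply, smul_eq_mul]
  by_cases h : da = d j
  · rw [dif_pos h, dif_pos h]
    have hcomp : ⇑e ∘ (f ∘ ⇑π) = (⇑e ∘ f) ∘ ⇑π := rfl
    rw [hcomp, det_mix_perm]
    simp
  · simp [dif_neg h]

theorem rowF_mem_span (e : Basis (Fin n) F W) (d : Fin m → ℕ) (hd : ∀ j, d j ≤ n)
    (famV : ∀ j, Fin (n - d j) → W) (da : ℕ) (f : Fin da → Fin n) :
    rowF e d hd famV da f ∈ Submodule.span F (Set.range (rowS e d hd famV)) := by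
  classical
  by_cases hf : Function.Injective f
  · set S : Finset (Fin n) := Finset.univ.image f with hSdef
    have hS : S.card = da := by
      rw [hSdef, Finset.card_image_of_injective _ hf, Finset.card_univ, Fintype.card_fin]
    have hmem : ∀ k, f k ∈ S := fun k => Finset.mem_image_of_mem f (Finset.mem_univ k)
    set g : Fin da → ↥S := fun k => ⟨f k, hmem k⟩ with hgdef
    have hg : Function.Bijective g := by
      rw [Fintype.bijective_iff_injective_and_card]
      exact ⟨fun a b hab => hf (congrArg Subtype.val hab),
        by rw [Fintype.card_coe, hS, Fintype.card_fin]⟩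
    set π : Equiv.Perm (Fin da) :=
      (Equiv.ofBijective g hg).trans (S.orderIsoOfFin hS).toEquiv.symm with hπdef
    have hfeq : f = (fun k : Fin S.card => (S.orderIsoOfFin rfl k : Fin n)) ∘
        Fin.cast hS.symm ∘ ⇑π := by
      funext k
      have h1 : S.orderIsoOfFin hS (π k) = g k := by
        have := (S.orderIsoOfFin hS).toEquiv.apply_symm_apply (Equiv.ofBijective g hg k)
        simp only [hπdef] at this ⊢; exact this
      have h2 : (S.orderIsoOfFin hS (π k) : Fin n) = f k := by rw [h1]
      rw [Function.comp_apply, Function.comp_apply, ← orderIso_cast S hS (π k), h2]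
    have hkey : rowF e d hd famV da f =
        (((Equiv.Perm.sign π : ℤ) : F)) • rowS e d hd famV S := by
      conv_lhs => rw [hfeq]
      rw [show ((fun k : Fin S.card => (S.orderIsoOfFin rfl k : Fin n)) ∘
            Fin.cast hS.symm ∘ ⇑π) = (((fun k : Fin S.card => (S.orderIsoOfFin rfl k : Fin n)) ∘
            Fin.cast hS.symm) ∘ ⇑π) from rfl]
      rw [rowF_perm, rowF_cast e d hd famV hS.symm]
      rfl
    rw [hkey]
    exact Submodule.smul_mem _ _ (Submodule.subset_span ⟨S, rfl⟩)
  · have hzero : rowF e d hd famV da f = 0 := by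
      funext j
      simp only [rowF, Pi.zero_apply]
      by_cases h : da = d j
      · rw [dif_pos h]
        obtain ⟨k₁, k₂, hkk, hne⟩ := Function.not_injective_iff.mp hf
        exact det_mix_dup e _ _ _ hne (by simp [hkk])
      · rw [dif_neg h]
    rw [hzero]
    exact Submodule.zero_mem _


theorem det_expand (e : Basis (Fin n) F W) {da db : ℕ} (hab : da + db = n)
    (x : Fin da → W) (y : Fin db → W) :
    e.det (mixFam n hab x y) =
      ∑ f : Fin da → Fin n, (∏ k, e.repr (x k) (f k)) • e.det (mixFam n hab (⇑e ∘ f) y) := by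
  classical
  set E := finSumFinEquiv.trans (finCongr hab) with hEdef
  set G : MultilinearMap F (fun _ : Fin da ⊕ Fin db => W) F :=
    MultilinearMap.domDomCongr E.symm e.det.toMultilinearMap with hGdef
  have hG : ∀ x' : Fin da → W, e.det (mixFam n hab x' y) = G.currySum x' y := fun x' => rfl
  rw [hG]
  have hx : x = fun k => ∑ t, e.repr (x k) t • e t := funext fun k => (e.sum_repr (x k)).symm
  conv_lhs => rw [hx]
  rw [MultilinearMap.map_sum, MultilinearMap.sum_apply]
  apply Finset.sum_congr rfl
  intro f _
  have h1 : (G.currySum fun k => e.repr (x k) (f k) • e (f k)) =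
      (∏ k, e.repr (x k) (f k)) • G.currySum (fun k => e (f k)) :=
    G.currySum.map_smul_univ _ _
  rw [h1, MultilinearMap.smul_apply]
  exact congrArg (fun z => (∏ k, e.repr (x k) (f k)) • z) (hG (⇑e ∘ f)).symm

noncomputable def Mrow (e : Basis (Fin n) F W) (d : Fin m → ℕ) (hd : ∀ j, d j ≤ n)
    (famU : ∀ i, Fin (d i) → W) (famV : ∀ j, Fin (n - d j) → W) (i : Fin m) : Fin m → F :=
  fun j => if h : d i = d j then
    e.det (mixFam n (show d i + (n - d j) = n by have := hd j; omega) (famU i) (famV j))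
  else 0

theorem Mrow_eq_sum (e : Basis (Fin n) F W) (d : Fin m → ℕ) (hd : ∀ j, d j ≤ n)
    (famU : ∀ i, Fin (d i) → W) (famV : ∀ j, Fin (n - d j) → W) (i : Fin m) :
    Mrow e d hd famU famV i =
      ∑ f : Fin (d i) → Fin n, (∏ k, e.repr (famU i k) (f k)) • rowF e d hd famV (d i) f := by
  classical
  funext j
  rw [Finset.sum_apply]
  by_cases h : d i = d j
  · simp only [Mrow, rowF, dif_pos h, Pi.smul_apply, smul_eq_mul]
    rw [det_expand e _ (famU i) (famV j)]
    simp [smul_eq_mul]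
  · simp only [Mrow, rowF, dif_neg h, Pi.smul_apply, smul_eq_mul, mul_zero]
    simp

end Aux

theorem skew_subspaces_bound (F : Type*) [Field F] (W : Type*) [AddCommGroup W]
    [Module F W] [FiniteDimensional F W] (n m : ℕ)
    (hn : Module.finrank F W = n)
    (U V : Fin m → Submodule F W)
    (hself : ∀ i, U i ⊓ V i = ⊥)
    (hskew : ∀ i j, i < j → U i ⊓ V j ≠ ⊥) :
    m ≤ 2 ^ n := by
  classical
  set d : Fin m → ℕ := fun i => finrank F (U i) with hd_def
  have hd : ∀ i, d i ≤ n := fun i => by rw [← hn]; exact Submodule.finrank_le _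
  have e := Module.finBasisOfFinrankEq F W hn
  choose Vc hVcle hVcompl using fun i => exists_compl_ge (U i) (V i) (hself i)
  have hVcd : ∀ i, finrank F (Vc i) = n - d i := by
    intro i
    have h2 : d i + finrank F ↥(Vc i) = n :=
      hn ▸ Submodule.finrank_add_eq_of_isCompl (hVcompl i)
    omega
  have key : ∀ i, ∃ (fU : Fin (d i) → W) (fV : Fin (n - d i) → W),
      (∀ k, fU k ∈ U i) ∧ (∀ l, fV l ∈ Vc i) ∧
      e.det (mixFam n (show d i + (n - d i) = n by have := hd i; omega) fU fV) ≠ 0 := by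
    intro i
    set bU := Module.finBasis F (U i) with hbU
    set bV := Module.finBasisOfFinrankEq F (Vc i) (hVcd i) with hbV
    set bW : Basis (Fin (d i) ⊕ Fin (n - d i)) F W :=
      (bU.prod bV).map (Submodule.prodEquivOfIsCompl _ _ (hVcompl i)) with hbW
    refine ⟨fun k => bW (Sum.inl k), fun l => bW (Sum.inr l), ?_, ?_, ?_⟩
    · intro k
      show bW (Sum.inl k) ∈ U i
      have : bW (Sum.inl k) = (bU k : W) := by
        simp [hbW, Basis.map_apply, Submodule.coe_prodEquivOfIsCompl']
      rw [this]; exact (bU k).2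
    · intro l
      show bW (Sum.inr l) ∈ Vc i
      have : bW (Sum.inr l) = (bV l : W) := by
        simp [hbW, Basis.map_apply, Submodule.coe_prodEquivOfIsCompl']
      rw [this]; exact (bV l).2
    · have hfam : mixFam n (show d i + (n - d i) = n by have := hd i; omega)
          (fun k => bW (Sum.inl k)) (fun l => bW (Sum.inr l)) =
          ⇑(bW.reindex (finSumFinEquiv.trans (finCongr (show d i + (n - d i) = n by
            have := hd i; omega)))) := by
        funext t
        rw [Basis.reindex_apply]
        show Sum.elim (fun k => bW (Sum.inl k)) (fun l => bW (Sum.inr l)) _ = _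
        rcases hs : (finSumFinEquiv.trans (finCongr (show d i + (n - d i) = n by
            have := hd i; omega))).symm t with k | l <;> simp
      rw [hfam]
      exact (e.isUnit_det _).ne_zero
  choose famU famV hfamU hfamV hdiag using key
  have htri : ∀ i j, i < j → Mrow e d hd famU famV i j = 0 := by
    intro i j hij
    show (if h : d i = d j then _ else 0) = 0
    split
    case isTrue h =>
      by_contra hne
      have hunit : IsUnit (e.det (mixFam n (show d i + (n - d j) = n by
          have := hd j; omega) (famU i) (famV j))) := isUnit_iff_ne_zero.mpr hne
      have hli := ((Basis.is_basis_iff_det e).mpr hunit).1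
      have hsub : ∀ t, mixFam n (show d i + (n - d j) = n by have := hd j; omega)
          (famU i) (famV j) t ∈ U i ⊔ Vc j := by
        intro t
        show Sum.elim (famU i) (famV j) _ ∈ _
        rcases (finSumFinEquiv.trans (finCongr (show d i + (n - d j) = n by
            have := hd j; omega))).symm t with k | l
        · exact Submodule.mem_sup_left (hfamU i k)
        · exact Submodule.mem_sup_right (hfamV j l)
      have h1 : n ≤ finrank F ↥(U i ⊔ Vc j) := by
        have hspan := finrank_span_eq_card hli
        have hle : Submodule.span F (Set.range (mixFam n (show d i + (n - d j) = n by
            have := hd j; omega) (famU i) (famV j))) ≤ U i ⊔ Vc j :=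
          Submodule.span_le.mpr (Set.range_subset_iff.mpr hsub)
        calc n = Fintype.card (Fin n) := (Fintype.card_fin n).symm
          _ = finrank F ↥(Submodule.span F _) := hspan.symm
          _ ≤ finrank F ↥(U i ⊔ Vc j) := Submodule.finrank_mono hle
      have h2 : finrank F ↥(U i ⊔ Vc j) + finrank F ↥(U i ⊓ Vc j) = d i + (n - d j) := by
        rw [Submodule.finrank_sup_add_finrank_inf_eq, hVcd j]
      have h3 : finrank F ↥(U i ⊓ Vc j) ≠ 0 := by
        rw [Ne, Submodule.finrank_eq_zero]
        intro hbot
        have hle2 : U i ⊓ V j ≤ U i ⊓ Vc j := inf_le_inf_left _ (hVcle j)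
        exact hskew i j hij (le_bot_iff.mp (hbot ▸ hle2))
      have := hd i; have := hd j
      omega
    case isFalse h => rfl
  have hdiag' : ∀ i, Mrow e d hd famU famV i i ≠ 0 := by
    intro i
    show (if h : d i = d i then _ else 0) ≠ 0
    rw [dif_pos rfl]
    exact hdiag i
  have hli : LinearIndependent F (Mrow e d hd famU famV) := triangular_li _ hdiag' htri
  have hmem : ∀ i, Mrow e d hd famU famV i ∈
      Submodule.span F (Set.range (rowS e d hd famV)) := by
    intro i
    rw [Mrow_eq_sum]
    exact Submodule.sum_mem _ fun f _ =>
      Submodule.smul_mem _ _ (rowF_mem_span e d hd famV (d i) f)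
  exact card_le_of_span hli _ hmem
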